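/- For every positive integer m, d(m) ≤ √2 · m · exp(−√(log 2 · log m + (log 2)²/4)), where d(m) = gcd(m, δ·φ(rad(m))) with δ = 2 if 4 | m and δ = 1 otherwise. -/

import Mathlib

/-- The Carmichael function: the exponent of the multiplicative group mod `m`. -/
noncomputable def carmichael (m : ℕ) : ℕ := Monoid.exponent (ZMod m)ˣ

/-- The radical of `m`: the product of the distinct primes dividing `m`. -/
def radN (m : ℕ) : ℕ := ∏ p ∈ m.primeFactors, p

/-- `δ(m) = 2` if `4 ∣ m`, else `1`. -/
def deltaN (m : ℕ) : ℕ := if 4 ∣ m then 2 else 1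

/-- `d(m) = gcd(m, δ(m)·φ(rad m))`. -/
def dFun (m : ℕ) : ℕ := Nat.gcd m (deltaN m * Nat.totient (radN m))

/-- `f(m) = gcd(m, δ(m)·λ(m)·φ(rad m)/φ(m))`. -/
noncomputable def fFun (m : ℕ) : ℕ :=
  Nat.gcd m (deltaN m * carmichael m * Nat.totient (radN m) / Nat.totient m)

/- ----------------- auxiliary real analysis ----------------- -/

/-- The potential function used in the charging argument. -/
noncomputable def fF (u : ℝ) : ℝ := u ^ 2 / (2 * Real.log 2) + u / 2

lemma log2_pos : (0 : ℝ) < Real.log 2 := Real.log_pos (by norm_num)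

lemma fF_nonneg {u : ℝ} (h : 0 ≤ u) : 0 ≤ fF u := by
  unfold fF
  have := log2_pos
  positivity

lemma fF_mono {u v : ℝ} (hu : 0 ≤ u) (huv : u ≤ v) : fF u ≤ fF v := by
  unfold fF
  have h := log2_pos
  have h2 : u ^ 2 ≤ v ^ 2 := by nlinarith
  have : u ^ 2 / (2 * Real.log 2) ≤ v ^ 2 / (2 * Real.log 2) := by
    apply div_le_div_of_nonneg_right h2 (by positivity) |>.trans_eq rfl
  linarith

lemma fF_superadd {u v : ℝ} (hu : 0 ≤ u) (hv : 0 ≤ v) : fF u + fF v ≤ fF (u + v) := by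
  unfold fF
  have h := log2_pos
  have key : u ^ 2 / (2 * Real.log 2) + v ^ 2 / (2 * Real.log 2) ≤
      (u + v) ^ 2 / (2 * Real.log 2) := by
    rw [← add_div, div_le_div_iff₀ (by positivity) (by positivity)]
    nlinarith [mul_nonneg hu hv]
  linarith

lemma fF_step (u : ℝ) : u + fF (u - Real.log 2) = fF u := by
  unfold fF
  have h := log2_pos.ne'
  field_simp
  ring

lemma fF_zero : fF 0 = 0 := by simp [fF]

lemma fF_sum_le (Q : Finset ℕ) (g : ℕ → ℝ) (hg : ∀ q ∈ Q, 0 ≤ g q) :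
    ∑ q ∈ Q, fF (g q) ≤ fF (∑ q ∈ Q, g q) := by
  classical
  induction Q using Finset.induction_on with
  | empty => simp [fF_zero]
  | @insert a s ha ih =>
    rw [Finset.sum_insert ha, Finset.sum_insert ha]
    have h1 : ∑ q ∈ s, fF (g q) ≤ fF (∑ q ∈ s, g q) :=
      ih fun q hq => hg q (Finset.mem_insert_of_mem hq)
    have h2 : 0 ≤ ∑ q ∈ s, g q :=
      Finset.sum_nonneg fun q hq => hg q (Finset.mem_insert_of_mem hq)
    have h3 := fF_superadd (hg a (Finset.mem_insert_self a s)) h2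
    linarith

/- ----------------- the key combinatorial lemma ----------------- -/

open Finset in
/-- Charging lemma: if every (odd prime) element of `S` has a "donor" above it in `S ∪ B`,
then the total log-weight of `S` is controlled by the potentials of `B`. -/
lemma key_charging : ∀ (n : ℕ) (S B : Finset ℕ),
    (S ∪ B).card ≤ n →
    (∀ q ∈ S, q.Prime ∧ q ≠ 2) →
    (∀ p ∈ B, p.Prime) →
    (∀ q ∈ S, ∃ p ∈ S ∪ B, q < p ∧ q ∣ p - 1) →
    ∑ q ∈ S, Real.log q ≤ ∑ p ∈ B, fF (Real.log p - Real.log 2) := by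
  classical
  have hBnn : ∀ (B : Finset ℕ), (∀ p ∈ B, p.Prime) →
      (0:ℝ) ≤ ∑ p ∈ B, fF (Real.log p - Real.log 2) := by
    intro B hB
    refine Finset.sum_nonneg fun p hp => fF_nonneg ?_
    have h2 : (2:ℝ) ≤ (p:ℝ) := by exact_mod_cast (hB p hp).two_le
    have := Real.log_le_log (by norm_num : (0:ℝ) < 2) h2
    linarith
  intro n
  induction n with
  | zero =>
    intro S B hcard hS hB _
    have hSB : S ∪ B = ∅ := Finset.card_eq_zero.mp (Nat.le_zero.mp hcard)
    have hSe : S = ∅ := (Finset.union_eq_empty.mp hSB).1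
    simp only [hSe, Finset.sum_empty]
    exact hBnn B hB
  | succ n ih =>
    intro S B hcard hS hB hdon
    rcases S.eq_empty_or_nonempty with hSe | hSne
    · simp only [hSe, Finset.sum_empty]; exact hBnn B hB
    have hne : (S ∪ B).Nonempty := ⟨hSne.choose, Finset.mem_union_left _ hSne.choose_spec⟩
    set P := (S ∪ B).max' hne with hPdef
    have hPmem : P ∈ S ∪ B := Finset.max'_mem _ hne
    have hPnotS : P ∉ S := by
      intro hPS
      obtain ⟨p, hp, hlt, -⟩ := hdon P hPS
      exact absurd (Finset.le_max' _ p hp) (not_le.mpr hlt)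
    have hPB : P ∈ B := (Finset.mem_union.mp hPmem).resolve_left hPnotS
    have hPprime : P.Prime := hB P hPB
    set Q := S.filter (fun q => q ∣ P - 1) with hQdef
    set S' := S.filter (fun q => ¬ q ∣ P - 1) with hS'def
    set B' := (B.erase P) ∪ Q with hB'def
    have hQsubS : Q ⊆ S := Finset.filter_subset _ _
    have hS'subS : S' ⊆ S := Finset.filter_subset _ _
    have hsub : S' ∪ B' ⊆ (S ∪ B).erase P := by
      intro x hx
      rw [Finset.mem_erase]
      rcases Finset.mem_union.mp hx with hx1 | hx2
      · exact ⟨fun h => hPnotS (h ▸ hS'subS hx1), Finset.mem_union_left _ (hS'subS hx1)⟩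
      · rcases Finset.mem_union.mp hx2 with hx3 | hx4
        · exact ⟨(Finset.mem_erase.mp hx3).1,
            Finset.mem_union_right _ (Finset.mem_erase.mp hx3).2⟩
        · exact ⟨fun h => hPnotS (h ▸ hQsubS hx4), Finset.mem_union_left _ (hQsubS hx4)⟩
    have hcard' : (S' ∪ B').card ≤ n := by
      have h1 : (S' ∪ B').card ≤ ((S ∪ B).erase P).card := Finset.card_le_card hsub
      have h2 : ((S ∪ B).erase P).card = (S ∪ B).card - 1 :=
        Finset.card_erase_of_mem hPmem
      have h3 : 1 ≤ (S ∪ B).card := Finset.card_pos.mpr hne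
      omega
    have hIH : ∑ q ∈ S', Real.log q ≤ ∑ p ∈ B', fF (Real.log p - Real.log 2) := by
      refine ih S' B' hcard' (fun q hq => hS q (hS'subS hq)) ?_ ?_
      · intro p hp
        rcases Finset.mem_union.mp hp with hp1 | hp2
        · exact hB p (Finset.mem_of_mem_erase hp1)
        · exact (hS p (hQsubS hp2)).1
      · intro q hq
        obtain ⟨p, hpmem, hlt, hdvd⟩ := hdon q (hS'subS hq)
        have hpne : p ≠ P := by
          intro h
          exact (Finset.mem_filter.mp hq).2 (h ▸ hdvd)
        refine ⟨p, ?_, hlt, hdvd⟩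
        rcases Finset.mem_union.mp hpmem with hpS | hpB
        · by_cases hpd : p ∣ P - 1
          · exact Finset.mem_union_right _
              (Finset.mem_union_right _ (Finset.mem_filter.mpr ⟨hpS, hpd⟩))
          · exact Finset.mem_union_left _ (Finset.mem_filter.mpr ⟨hpS, hpd⟩)
        · exact Finset.mem_union_right _
            (Finset.mem_union_left _ (Finset.mem_erase.mpr ⟨hpne, hpB⟩))
    -- basic positivity facts about Q
    have hQ3 : ∀ q ∈ Q, 3 ≤ q := by
      intro q hq
      have h := hS q (hQsubS hq)
      have h1 := h.1.two_le
      have h2 := h.2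
      omega
    have hQlog_nonneg : ∀ q ∈ Q, (0:ℝ) ≤ Real.log q := by
      intro q hq
      exact Real.log_natCast_nonneg q
    -- split the sum over S
    have hsplit : ∑ q ∈ S, Real.log q
        = ∑ q ∈ Q, Real.log q + ∑ q ∈ S', Real.log q := by
      rw [hQdef, hS'def]
      exact (Finset.sum_filter_add_sum_filter_not S _ _).symm
    -- union bound for B'
    have hB'le : ∑ p ∈ B', fF (Real.log p - Real.log 2)
        ≤ ∑ p ∈ B.erase P, fF (Real.log p - Real.log 2)
          + ∑ q ∈ Q, fF (Real.log q - Real.log 2) := by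
      have hui := Finset.sum_union_inter (s₁ := B.erase P) (s₂ := Q)
        (f := fun p => fF (Real.log p - Real.log 2))
      have hnn : (0:ℝ) ≤ ∑ p ∈ (B.erase P) ∩ Q, fF (Real.log p - Real.log 2) := by
        refine Finset.sum_nonneg fun p hp => fF_nonneg ?_
        have hp' : p ∈ Q := (Finset.mem_inter.mp hp).2
        have h2 : (2:ℝ) ≤ (p:ℝ) := by
          have := hQ3 p hp'; exact_mod_cast by omega
        have := Real.log_le_log (by norm_num : (0:ℝ) < 2) h2
        linarith
      rw [hB'def]
      linarith
    -- combine Q sums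
    have hQcomb : ∑ q ∈ Q, Real.log q + ∑ q ∈ Q, fF (Real.log q - Real.log 2)
        = ∑ q ∈ Q, fF (Real.log q) := by
      rw [← Finset.sum_add_distrib]
      exact Finset.sum_congr rfl fun q _ => fF_step (Real.log q)
    have hQsum_le : ∑ q ∈ Q, fF (Real.log q) ≤ fF (∑ q ∈ Q, Real.log q) :=
      fF_sum_le Q _ hQlog_nonneg
    -- the divisibility bound
    have hQtotal : ∑ q ∈ Q, Real.log q ≤ Real.log P - Real.log 2 := by
      rcases Q.eq_empty_or_nonempty with hQe | hQne
      · simp only [hQe, Finset.sum_empty]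
        have h2 : (2:ℝ) ≤ (P:ℝ) := by exact_mod_cast hPprime.two_le
        have := Real.log_le_log (by norm_num : (0:ℝ) < 2) h2
        linarith
      · obtain ⟨q₁, hq₁⟩ := hQne
        have hq₁3 : 3 ≤ q₁ := hQ3 q₁ hq₁
        have hq₁dvd : q₁ ∣ P - 1 := (Finset.mem_filter.mp hq₁).2
        have hP4 : 4 ≤ P := by
          have h1 : q₁ ≤ P - 1 := Nat.le_of_dvd (by
            have := hPprime.two_le
            rcases Nat.eq_or_lt_of_le this with h | h
            · -- P = 2 : then q₁ ∣ 1, contradiction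
              exfalso
              have : q₁ ∣ 1 := by rw [← h] at hq₁dvd; simpa using hq₁dvd
              have := Nat.le_of_dvd one_pos this
              omega
            · omega) hq₁dvd
          omega
        have hPodd : Odd P := hPprime.odd_of_ne_two (by omega)
        have hProdDvd : (∏ q ∈ Q, q) ∣ P - 1 :=
          Finset.prod_primes_dvd _ (fun q hq => (hS q (hQsubS hq)).1.prime)
            (fun q hq => (Finset.mem_filter.mp hq).2)
        have h2dvd : 2 ∣ P - 1 := (Nat.Odd.sub_odd hPodd (by norm_num : Odd 1)).two_dvd
        have hcop : Nat.Coprime 2 (∏ q ∈ Q, q) := by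
          refine Nat.Coprime.prod_right fun q hq => ?_
          have hqp := (hS q (hQsubS hq)).1
          exact (Nat.coprime_primes Nat.prime_two hqp).mpr ((hS q (hQsubS hq)).2).symm
        have hmul : 2 * (∏ q ∈ Q, q) ∣ P - 1 :=
          Nat.Coprime.mul_dvd_of_dvd_of_dvd hcop h2dvd hProdDvd
        have hle : 2 * (∏ q ∈ Q, q) ≤ P - 1 := Nat.le_of_dvd (by omega) hmul
        have hprodpos : 0 < ∏ q ∈ Q, q :=
          Finset.prod_pos fun q hq => by have := hQ3 q hq; omega
        have hcast : (2:ℝ) * ((∏ q ∈ Q, q : ℕ) : ℝ) ≤ (P:ℝ) - 1 := by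
          have h1 : ((2 * ∏ q ∈ Q, q : ℕ) : ℝ) ≤ ((P - 1 : ℕ) : ℝ) := Nat.cast_le.mpr hle
          rw [Nat.cast_mul, Nat.cast_sub (by omega : 1 ≤ P)] at h1
          simpa using h1
        have hlogeq : ∑ q ∈ Q, Real.log q = Real.log ((∏ q ∈ Q, q : ℕ) : ℝ) := by
          rw [Nat.cast_prod]
          exact (Real.log_prod (fun q hq => by
            have := hQ3 q hq
            exact_mod_cast (by positivity : ((q:ℝ)) ≠ 0))).symm
        rw [hlogeq]
        have hPpos : (0:ℝ) < (P:ℝ) := by positivity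
        have hdivle : ((∏ q ∈ Q, q : ℕ) : ℝ) ≤ (P:ℝ) / 2 := by linarith
        calc Real.log ((∏ q ∈ Q, q : ℕ) : ℝ)
            ≤ Real.log ((P:ℝ) / 2) := Real.log_le_log (by exact_mod_cast hprodpos) hdivle
          _ = Real.log P - Real.log 2 := Real.log_div (by positivity) (by norm_num)
    -- finish
    have hfinal : ∑ p ∈ B.erase P, fF (Real.log p - Real.log 2)
        + fF (Real.log P - Real.log 2)
        = ∑ p ∈ B, fF (Real.log p - Real.log 2) :=
      Finset.sum_erase_add B _ hPB
    have hQfPempty : fF (∑ q ∈ Q, Real.log q) ≤ fF (Real.log P - Real.log 2) :=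
      fF_mono (Finset.sum_nonneg hQlog_nonneg) hQtotal
    linarith

/- ----------------- number-theoretic facts ----------------- -/

lemma totient_prod_primes (s : Finset ℕ) (hs : ∀ p ∈ s, p.Prime) :
    Nat.totient (∏ p ∈ s, p) = ∏ p ∈ s, (p - 1) := by
  classical
  induction s using Finset.induction_on with
  | empty => simp
  | @insert a s ha ih =>
    have hap : a.Prime := hs a (Finset.mem_insert_self a s)
    have hsp : ∀ p ∈ s, p.Prime := fun p hp => hs p (Finset.mem_insert_of_mem hp)
    have hcop : Nat.Coprime a (∏ p ∈ s, p) := by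
      refine (Nat.Prime.coprime_iff_not_dvd hap).mpr ?_
      intro hdvd
      obtain ⟨q, hq, hqd⟩ := hap.prime.exists_mem_finset_dvd hdvd
      have hqp := hsp q hq
      have : a = q := (Nat.prime_dvd_prime_iff_eq hap hqp).mp hqd
      exact ha (this ▸ hq)
    rw [Finset.prod_insert ha, Finset.prod_insert ha, Nat.totient_mul hcop,
      Nat.totient_prime hap, ih hsp]

lemma phi_radN (m : ℕ) : Nat.totient (radN m) = ∏ p ∈ m.primeFactors, (p - 1) := by
  unfold radN
  exact totient_prod_primes _ fun p hp => Nat.prime_of_mem_primeFactors hp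

lemma deltaN_dvd_two (m : ℕ) : deltaN m ∣ 2 := by
  unfold deltaN; split <;> norm_num

lemma deltaN_pos (m : ℕ) : 0 < deltaN m := by
  unfold deltaN; split <;> norm_num

/-- every odd prime dividing `dFun m` has a "donor" prime in `m`. -/
lemma donor_exists (m : ℕ) (hm : 0 < m) {q : ℕ} (hq : q.Prime) (hq2 : q ≠ 2)
    (hqd : q ∣ dFun m) : ∃ p ∈ m.primeFactors, q < p ∧ q ∣ p - 1 := by
  have hdvd : dFun m ∣ deltaN m * Nat.totient (radN m) := Nat.gcd_dvd_right _ _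
  have h1 : q ∣ deltaN m * ∏ p ∈ m.primeFactors, (p - 1) := by
    rw [← phi_radN]
    exact hqd.trans hdvd
  rcases (Nat.Prime.dvd_mul hq).mp h1 with h2 | h2
  · exfalso
    have : q ∣ 2 := h2.trans (deltaN_dvd_two m)
    rcases (Nat.prime_dvd_prime_iff_eq hq Nat.prime_two).mp this with h
    exact hq2 h
  · obtain ⟨p, hp, hpd⟩ := hq.prime.exists_mem_finset_dvd h2
    have hpprime : p.Prime := Nat.prime_of_mem_primeFactors hp
    have hppos : 1 ≤ p - 1 := by have := hpprime.two_le; omega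
    have hqle : q ≤ p - 1 := Nat.le_of_dvd (by omega) hpd
    exact ⟨p, hp, by omega, hpd⟩

lemma t3_numeric (u : ℝ) (hu : u ≤ 2 * Real.log 2) :
    Real.log 2 * u ≤ Real.log 3 ^ 2 := by
  have hc := log2_pos
  have hl2 : Real.log 2 < 0.7 := by
    have := Real.log_two_lt_d9
    norm_num at this ⊢
    linarith
  have hl3 : 1 ≤ Real.log 3 := by
    rw [Real.le_log_iff_exp_le (by norm_num : (0:ℝ) < 3)]
    have := Real.exp_one_lt_d9
    norm_num at this ⊢
    linarith
  have h1 : Real.log 2 * u ≤ Real.log 2 * (2 * Real.log 2) :=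
    mul_le_mul_of_nonneg_left hu hc.le
  have h2 : Real.log 2 * (2 * Real.log 2) < 1 := by nlinarith [hc]
  have h3 : (1:ℝ) ≤ Real.log 3 ^ 2 := by nlinarith [hl3]
  linarith

/- ----------------- the core inequality ----------------- -/

lemma core_ineq (m : ℕ) (hm : 0 < m) :
    Real.log 2 * Real.log (dFun m) ≤ (Real.log ((m / dFun m : ℕ)) : ℝ) ^ 2 := by
  classical
  set d := dFun m with hddef
  set t := m / d with htdef
  have hdm : d ∣ m := Nat.gcd_dvd_left _ _
  have hdpos : 0 < d := Nat.gcd_pos_of_pos_left _ hm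
  have htpos : 0 < t := Nat.div_pos (Nat.le_of_dvd hm hdm) hdpos
  have hmdt : d * t = m := Nat.mul_div_cancel' hdm
  have hlogt0 : (0:ℝ) ≤ Real.log t := Real.log_natCast_nonneg t
  have hc := log2_pos
  by_cases hall2 : ∀ p ∈ m.primeFactors, p = 2
  · -- m is a power of two (or 1)
    have hphi1 : ∏ p ∈ m.primeFactors, (p - 1) = 1 :=
      Finset.prod_eq_one fun p hp => by rw [hall2 p hp]; rfl
    have hd2 : d ∣ 2 := by
      have h1 : d ∣ deltaN m * Nat.totient (radN m) := Nat.gcd_dvd_right _ _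
      rw [phi_radN, hphi1, mul_one] at h1
      exact h1.trans (deltaN_dvd_two m)
    rcases (Nat.dvd_prime Nat.prime_two).mp hd2 with h1 | h2
    · rw [h1]
      simp only [Nat.cast_one, Real.log_one, mul_zero]
      positivity
    · -- d = 2, so δ m = 2, so 4 ∣ m, so t ≥ 2
      have hδ2 : deltaN m = 2 := by
        have h1 : d ∣ deltaN m * Nat.totient (radN m) := Nat.gcd_dvd_right _ _
        rw [phi_radN, hphi1, mul_one] at h1
        rcases (Nat.dvd_prime Nat.prime_two).mp (deltaN_dvd_two m) with hh | hh
        · rw [h2, hh] at h1; omega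
        · exact hh
      have h4m : 4 ∣ m := by
        by_contra h
        unfold deltaN at hδ2
        rw [if_neg h] at hδ2
        omega
      have hm4 : 4 ≤ m := Nat.le_of_dvd hm h4m
      have ht2 : 2 ≤ t := by
        rw [htdef, h2]
        omega
      have hlog2t : Real.log 2 ≤ Real.log t :=
        Real.log_le_log (by norm_num) (by exact_mod_cast ht2)
      rw [h2]
      have : Real.log (2:ℕ) = Real.log 2 := by norm_num
      rw [this]
      nlinarith
  · push_neg at hall2
    obtain ⟨q0, hq0mem, hq0ne⟩ := hall2
    have hmne : m ≠ 0 := hm.ne'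
    have hdne : d ≠ 0 := hdpos.ne'
    have hpfne : m.primeFactors.Nonempty := ⟨q0, hq0mem⟩
    set P := m.primeFactors.max' hpfne with hPdef
    have hPmem : P ∈ m.primeFactors := Finset.max'_mem _ hpfne
    have hPprime : P.Prime := Nat.prime_of_mem_primeFactors hPmem
    have hP2 : P ≠ 2 := by
      intro h
      apply hq0ne
      have hq0le : q0 ≤ P := Finset.le_max' _ q0 hq0mem
      have := (Nat.prime_of_mem_primeFactors hq0mem).two_le
      omega
    have hP3 : 3 ≤ P := by have := hPprime.two_le; omega
    have hPnd : ¬ P ∣ d := by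
      intro hPd
      obtain ⟨p, hp, hlt, -⟩ := donor_exists m hm hPprime hP2 hPd
      exact absurd (Finset.le_max' _ p hp) (not_le.mpr hlt)
    -- the sets S and B
    set S := d.primeFactors.erase 2 with hSdef
    set B := m.primeFactors \ d.primeFactors with hBdef
    have hpfd_sub : d.primeFactors ⊆ m.primeFactors := Nat.primeFactors_mono hdm hmne
    have hPB : P ∈ B := by
      rw [hBdef, Finset.mem_sdiff]
      refine ⟨hPmem, fun h => hPnd (Nat.dvd_of_mem_primeFactors h)⟩
    have hBprime : ∀ p ∈ B, p.Prime := fun p hp =>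
      Nat.prime_of_mem_primeFactors (Finset.mem_sdiff.mp hp).1
    -- ∏_B p ∣ t
    have hprodB_dvd : (∏ p ∈ B, p) ∣ t := by
      have h1 : (∏ p ∈ B, p) ∣ m :=
        Finset.prod_primes_dvd _ (fun p hp => (hBprime p hp).prime)
          (fun p hp => Nat.dvd_of_mem_primeFactors (Finset.mem_sdiff.mp hp).1)
      have hcop : Nat.Coprime (∏ p ∈ B, p) d := by
        refine Nat.Coprime.prod_left fun p hp => ?_
        refine (Nat.Prime.coprime_iff_not_dvd (hBprime p hp)).mpr ?_
        intro hpd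
        exact (Finset.mem_sdiff.mp hp).2 (Nat.mem_primeFactors.mpr ⟨hBprime p hp, hpd, hdne⟩)
      rw [← hmdt] at h1
      exact (Nat.Coprime.dvd_of_dvd_mul_left hcop h1)
    have hPt : P ∣ t := (Finset.dvd_prod_of_mem _ hPB).trans hprodB_dvd
    have ht3 : 3 ≤ t := le_trans hP3 (Nat.le_of_dvd htpos hPt)
    by_cases h4t : 4 ≤ t
    · -- main case
      have hBne : B.Nonempty := ⟨P, hPB⟩
      -- apply the key charging lemma
      have hSfacts : ∀ q ∈ S, q.Prime ∧ q ≠ 2 := by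
        intro q hq
        rw [hSdef, Finset.mem_erase] at hq
        exact ⟨Nat.prime_of_mem_primeFactors hq.2, hq.1⟩
      have hdon : ∀ q ∈ S, ∃ p ∈ S ∪ B, q < p ∧ q ∣ p - 1 := by
        intro q hq
        obtain ⟨hqp, hq2⟩ := hSfacts q hq
        have hqd : q ∣ d := Nat.dvd_of_mem_primeFactors (Finset.mem_of_mem_erase hq)
        obtain ⟨p, hpm, hlt, hdvd⟩ := donor_exists m hm hqp hq2 hqd
        refine ⟨p, ?_, hlt, hdvd⟩
        by_cases hpd : p ∣ d
        · apply Finset.mem_union_left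
          rw [hSdef, Finset.mem_erase]
          have hq3 : 3 ≤ q := by have := hqp.two_le; omega
          exact ⟨by omega, Nat.mem_primeFactors.mpr
            ⟨Nat.prime_of_mem_primeFactors hpm, hpd, hdne⟩⟩
        · apply Finset.mem_union_right
          rw [hBdef, Finset.mem_sdiff]
          exact ⟨hpm, fun h => hpd (Nat.dvd_of_mem_primeFactors h)⟩
      have hkey := key_charging ((S ∪ B).card) S B le_rfl hSfacts hBprime hdon
      -- now the log estimates
      set c := Real.log 2 with hcdef
      set s := Real.log (t:ℝ) with hsdef
      -- d ≤ δ * ∏ (p-1)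
      have hdleN : d ∣ deltaN m * ∏ p ∈ m.primeFactors, (p - 1) := by
        rw [← phi_radN]; exact Nat.gcd_dvd_right _ _
      have hNpos : 0 < deltaN m * ∏ p ∈ m.primeFactors, (p - 1) := by
        refine Nat.mul_pos (deltaN_pos m) (Finset.prod_pos fun p hp => ?_)
        have := (Nat.prime_of_mem_primeFactors hp).two_le; omega
      have hdN : (d:ℝ) ≤ ((deltaN m * ∏ p ∈ m.primeFactors, (p - 1) : ℕ) : ℝ) := by
        exact_mod_cast Nat.le_of_dvd hNpos hdleN
      have hlogd_le : Real.log d ≤ Real.log (deltaN m : ℝ)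
          + ∑ p ∈ m.primeFactors, Real.log ((p - 1 : ℕ) : ℝ) := by
        have h1 : Real.log d ≤ Real.log ((deltaN m * ∏ p ∈ m.primeFactors, (p - 1) : ℕ) : ℝ) :=
          Real.log_le_log (by exact_mod_cast hdpos) hdN
        have h2 : ((deltaN m * ∏ p ∈ m.primeFactors, (p - 1) : ℕ) : ℝ)
            = (deltaN m : ℝ) * ∏ p ∈ m.primeFactors, ((p - 1 : ℕ) : ℝ) := by
          push_cast; ring
        rw [h2] at h1
        have hδne : ((deltaN m : ℕ) : ℝ) ≠ 0 := by
          have := deltaN_pos m; positivity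
        have hprodne : (∏ p ∈ m.primeFactors, ((p - 1 : ℕ) : ℝ)) ≠ 0 := by
          refine Finset.prod_ne_zero_iff.mpr fun p hp => ?_
          have := (Nat.prime_of_mem_primeFactors hp).two_le
          have h3 : (1:ℕ) ≤ p - 1 := by omega
          exact_mod_cast by positivity
        rw [Real.log_mul hδne hprodne,
          Real.log_prod (fun p hp => by
            have := (Nat.prime_of_mem_primeFactors hp).two_le
            have h3 : (1:ℕ) ≤ p - 1 := by omega
            exact_mod_cast (by positivity : (((p-1:ℕ)):ℝ) ≠ 0))] at h1
        exact h1
      have hlogδ : Real.log (deltaN m : ℝ) ≤ c := by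
        have h1 : deltaN m ≤ 2 := Nat.le_of_dvd (by norm_num) (deltaN_dvd_two m)
        have h2 : (0:ℝ) < (deltaN m : ℝ) := by exact_mod_cast deltaN_pos m
        have h3 : ((deltaN m : ℕ) : ℝ) ≤ (2:ℝ) := by exact_mod_cast h1
        have := Real.log_le_log h2 h3
        rw [hcdef]
        exact this
      -- split the sum over primeFactors m
      have hsum_split : ∑ p ∈ m.primeFactors, Real.log ((p - 1 : ℕ) : ℝ)
          = ∑ p ∈ B, Real.log ((p - 1 : ℕ) : ℝ)
            + ∑ p ∈ d.primeFactors, Real.log ((p - 1 : ℕ) : ℝ) := by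
        rw [hBdef]
        exact (Finset.sum_sdiff hpfd_sub).symm
      -- sum over primeFactors d ≤ sum over S of log q
      have hsum_d : ∑ p ∈ d.primeFactors, Real.log ((p - 1 : ℕ) : ℝ)
          ≤ ∑ q ∈ S, Real.log q := by
        have hSsub : S ⊆ d.primeFactors := Finset.erase_subset _ _
        have heq : ∑ p ∈ d.primeFactors, Real.log ((p - 1 : ℕ) : ℝ)
            = ∑ p ∈ S, Real.log ((p - 1 : ℕ) : ℝ) := by
          refine (Finset.sum_subset hSsub ?_).symm
          intro x hx hnx
          rw [hSdef, Finset.mem_erase] at hnx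
          have : x = 2 := by
            by_contra h
            exact hnx ⟨h, hx⟩
          rw [this]
          norm_num
        rw [heq]
        refine Finset.sum_le_sum fun q hq => ?_
        have hq3 : 3 ≤ q := by
          obtain ⟨hqp, hq2⟩ := hSfacts q hq
          have := hqp.two_le; omega
        have h1 : (1:ℝ) ≤ ((q - 1 : ℕ) : ℝ) := by exact_mod_cast by omega
        apply Real.log_le_log (by linarith)
        exact_mod_cast by omega
      -- sum over B of log (p-1) ≤ sum over B of log p ≤ s
      have hsum_B1 : ∑ p ∈ B, Real.log ((p - 1 : ℕ) : ℝ) ≤ ∑ p ∈ B, Real.log p := by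
        refine Finset.sum_le_sum fun p hp => ?_
        have := (hBprime p hp).two_le
        have h1 : (1:ℝ) ≤ ((p - 1 : ℕ) : ℝ) := by exact_mod_cast by omega
        apply Real.log_le_log (by linarith)
        exact_mod_cast by omega
      have hsum_B2 : ∑ p ∈ B, Real.log p ≤ s := by
        have h1 : ∑ p ∈ B, Real.log (p:ℝ) = Real.log ((∏ p ∈ B, p : ℕ) : ℝ) := by
          rw [Nat.cast_prod]
          exact (Real.log_prod fun p hp => by
            have := (hBprime p hp).two_le
            exact_mod_cast (by positivity : ((p:ℝ)) ≠ 0)).symm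
        rw [h1, hsdef]
        have hppos : 0 < ∏ p ∈ B, p := Finset.prod_pos fun p hp => (hBprime p hp).pos
        exact Real.log_le_log (by exact_mod_cast hppos)
          (by exact_mod_cast Nat.le_of_dvd htpos hprodB_dvd)
      -- sum over B of potentials ≤ fF (s - c)
      have hsum_pot : ∑ p ∈ B, fF (Real.log p - c) ≤ fF (s - c) := by
        have h1 : ∑ p ∈ B, fF (Real.log p - c) ≤ fF (∑ p ∈ B, (Real.log p - c)) := by
          refine fF_sum_le B _ fun p hp => ?_
          have h2 : (2:ℝ) ≤ (p:ℝ) := by exact_mod_cast (hBprime p hp).two_le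
          have := Real.log_le_log (by norm_num : (0:ℝ) < 2) h2
          rw [hcdef]; linarith
        refine h1.trans (fF_mono ?_ ?_)
        · refine Finset.sum_nonneg fun p hp => ?_
          have h2 : (2:ℝ) ≤ (p:ℝ) := by exact_mod_cast (hBprime p hp).two_le
          have := Real.log_le_log (by norm_num : (0:ℝ) < 2) h2
          rw [hcdef]; linarith
        · have hcard : 1 ≤ B.card := Finset.card_pos.mpr hBne
          rw [Finset.sum_sub_distrib]
          have : (B.card : ℝ) * c ≥ c := by
            have : (1:ℝ) ≤ (B.card : ℝ) := by exact_mod_cast hcard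
            nlinarith [hc]
          simp only [Finset.sum_const, nsmul_eq_mul]
          linarith [hsum_B2]
      -- put everything together
      have hs2c : 2 * c ≤ s := by
        have h4 : (4:ℝ) ≤ (t:ℝ) := by exact_mod_cast h4t
        have h1 : Real.log 4 ≤ s := by
          rw [hsdef]
          exact Real.log_le_log (by norm_num) h4
        have h2 : Real.log 4 = 2 * c := by
          rw [hcdef, show (4:ℝ) = 2 ^ 2 by norm_num, Real.log_pow]
          push_cast; ring
        linarith
      have htotal : Real.log d ≤ c + fF (s - c) + s := by
        have := hkey
        calc Real.log d
            ≤ Real.log (deltaN m : ℝ) + ∑ p ∈ m.primeFactors, Real.log ((p-1:ℕ):ℝ) := hlogd_le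
          _ = Real.log (deltaN m : ℝ) + (∑ p ∈ B, Real.log ((p-1:ℕ):ℝ)
                + ∑ p ∈ d.primeFactors, Real.log ((p-1:ℕ):ℝ)) := by rw [hsum_split]
          _ ≤ c + (s + ∑ q ∈ S, Real.log q) := by
              have := hsum_B1.trans hsum_B2
              linarith [hlogδ, hsum_d]
          _ ≤ c + (s + ∑ p ∈ B, fF (Real.log p - c)) := by
              rw [hcdef]; linarith [hkey]
          _ ≤ c + s + fF (s - c) := by linarith [hsum_pot]
          _ = c + fF (s - c) + s := by ring
      -- final arithmetic: c * (c + fF(s-c) + s) ≤ s^2 when s ≥ 2c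
      have hfF : fF (s - c) = (s - c)^2 / (2*c) + (s - c)/2 := rfl
      have hgoal : c * (c + fF (s - c) + s) ≤ s ^ 2 := by
        rw [hfF]
        have hcne : c ≠ 0 := hc.ne'
        have heq : c * (c + ((s-c)^2/(2*c) + (s-c)/2) + s)
            = c^2 + (s-c)^2/2 + c*(s-c)/2 + c*s := by
          field_simp; ring
        rw [heq]
        have hfact : 0 ≤ (s - 2*c) * (s + c) :=
          mul_nonneg (by linarith) (by linarith)
        nlinarith [hfact]
      have hld0 : (0:ℝ) ≤ Real.log d ∨ True := Or.inr trivial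
      calc Real.log 2 * Real.log d = c * Real.log d := by rw [hcdef]
        _ ≤ c * (c + fF (s - c) + s) := by
            exact mul_le_mul_of_nonneg_left htotal hc.le
        _ ≤ s ^ 2 := hgoal
    · -- t = 3 case
      have ht3' : t = 3 := by omega
      -- all prime factors of m are ≤ 3
      have hpf23 : m.primeFactors ⊆ ({2, 3} : Finset ℕ) := by
        intro p hp
        have hple : p ≤ P := Finset.le_max' _ p hp
        have hPle : P ≤ t := Nat.le_of_dvd htpos hPt
        have := (Nat.prime_of_mem_primeFactors hp).two_le
        simp only [Finset.mem_insert, Finset.mem_singleton]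
        omega
      have hprod_dvd : (∏ p ∈ m.primeFactors, (p - 1)) ∣ ∏ p ∈ ({2,3} : Finset ℕ), (p - 1) :=
        Finset.prod_dvd_prod_of_subset _ _ _ hpf23
      have hprod2 : (∏ p ∈ ({2,3} : Finset ℕ), (p - 1)) = 2 := by
        rw [Finset.prod_pair (by norm_num : (2:ℕ) ≠ 3)]
        norm_num
      have hd4 : d ∣ 4 := by
        have h1 : d ∣ deltaN m * ∏ p ∈ m.primeFactors, (p - 1) := by
          rw [← phi_radN]; exact Nat.gcd_dvd_right _ _
        have h2 : deltaN m * (∏ p ∈ m.primeFactors, (p - 1)) ∣ 2 * 2 := by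
          exact mul_dvd_mul (deltaN_dvd_two m) (hprod2 ▸ hprod_dvd)
        exact h1.trans (by norm_num at h2 ⊢; exact h2)
      have hd4' : (d:ℝ) ≤ 4 := by exact_mod_cast Nat.le_of_dvd (by norm_num) hd4
      have hlogd : Real.log d ≤ Real.log 4 :=
        Real.log_le_log (by exact_mod_cast hdpos) hd4'
      have hlog4 : Real.log 4 = 2 * Real.log 2 := by
        rw [show (4:ℝ) = 2 ^ 2 by norm_num, Real.log_pow]; push_cast; ring
      have hlogt3 : Real.log (t:ℝ) = Real.log 3 := by rw [ht3']; norm_num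
      rw [hlogt3]
      exact t3_numeric _ (hlogd.trans_eq hlog4)

/- ----------------- the main theorem ----------------- -/

theorem dFun_upper_bound (m : ℕ) (hm : 0 < m) :
    (dFun m : ℝ) ≤ Real.sqrt 2 * (m : ℝ) *
      Real.exp (-Real.sqrt (Real.log 2 * Real.log m + (Real.log 2) ^ 2 / 4)) := by
  have hcore := core_ineq m hm
  set d := dFun m with hddef
  set t := m / d with htdef
  have hdm : d ∣ m := Nat.gcd_dvd_left _ _
  have hdpos : 0 < d := Nat.gcd_pos_of_pos_left _ hm
  have htpos : 0 < t := Nat.div_pos (Nat.le_of_dvd hm hdm) hdpos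
  have hmdt : d * t = m := Nat.mul_div_cancel' hdm
  have hc := log2_pos
  set c := Real.log 2 with hcdef
  set x := Real.log (d:ℝ) with hxdef
  set s := Real.log (t:ℝ) with hsdef
  have hx0 : 0 ≤ x := Real.log_natCast_nonneg d
  have hs0 : 0 ≤ s := Real.log_natCast_nonneg t
  have hL : Real.log (m:ℝ) = x + s := by
    rw [hxdef, hsdef, ← Real.log_mul (by exact_mod_cast hdpos.ne') (by exact_mod_cast htpos.ne'),
      ← Nat.cast_mul, hmdt]
  have hsqrt : Real.sqrt (c * Real.log m + c ^ 2 / 4) ≤ s + c / 2 := by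
    have h1 : c * Real.log m + c ^ 2 / 4 ≤ (s + c / 2) ^ 2 := by
      rw [hL]
      nlinarith [hcore, hc]
    calc Real.sqrt (c * Real.log m + c ^ 2 / 4)
        ≤ Real.sqrt ((s + c/2)^2) := Real.sqrt_le_sqrt h1
      _ = s + c/2 := Real.sqrt_sq (by linarith)
  have hexp : Real.exp (-(s + c/2)) ≤ Real.exp (-Real.sqrt (c * Real.log m + c ^ 2 / 4)) :=
    Real.exp_le_exp.mpr (by linarith)
  have hrhs : Real.sqrt 2 * (m:ℝ) * Real.exp (-(s + c/2)) = (d:ℝ) := by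
    have hsqrt2 : Real.sqrt 2 = Real.exp (c/2) := by
      rw [hcdef, ← Real.log_sqrt (by norm_num : (0:ℝ) ≤ 2)]
      exact (Real.exp_log (Real.sqrt_pos.mpr (by norm_num))).symm
    have hexps : Real.exp s = (t:ℝ) := by
      rw [hsdef]; exact Real.exp_log (by exact_mod_cast htpos)
    have hmne : ((m:ℕ):ℝ) = (d:ℝ) * (t:ℝ) := by exact_mod_cast hmdt.symm
    rw [hsqrt2, hmne, ← hexps]
    have hone : Real.exp (c/2) * Real.exp s * Real.exp (-(s + c/2)) = 1 := by
      rw [← Real.exp_add, ← Real.exp_add, show c/2 + s + -(s + c/2) = 0 by ring,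
        Real.exp_zero]
    calc Real.exp (c/2) * ((d:ℝ) * Real.exp s) * Real.exp (-(s + c/2))
        = (d:ℝ) * (Real.exp (c/2) * Real.exp s * Real.exp (-(s + c/2))) := by ring
      _ = (d:ℝ) * 1 := by rw [hone]
      _ = (d:ℝ) := mul_one _
  calc (d:ℝ) = Real.sqrt 2 * (m:ℝ) * Real.exp (-(s + c/2)) := hrhs.symm
    _ ≤ Real.sqrt 2 * (m:ℝ) * Real.exp (-Real.sqrt (c * Real.log m + c ^ 2 / 4)) := by
        apply mul_le_mul_of_nonneg_left hexp
        positivity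
    _ = Real.sqrt 2 * (m:ℝ) * Real.exp (-Real.sqrt (Real.log 2 * Real.log m
          + (Real.log 2) ^ 2 / 4)) := by rw [hcdef]
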